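/- Let S be an inverse semigroup with zero, s ∈ S, and e, f idempotents of S with f ≤ e and f dense in e. Then s⁻¹·f·s ≤ s⁻¹·e·s and s⁻¹·f·s is dense in s⁻¹·e·s. (This is the invariance claim for core representations underlying Proposition 4.7.) -/
import Mathlib


/-- An inverse semigroup with zero: a semigroup with an absorbing element `0` and an
inverse operation satisfying `s * s⁻¹ * s = s` and `s⁻¹ * s * s⁻¹ = s⁻¹`, in which any two
idempotents commute. -/
class InverseSemigroupWithZero (S : Type*) extends Semigroup S, Zero S, Inv S where
  zero_mul : ∀ s : S, 0 * s = 0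
  mul_zero : ∀ s : S, s * 0 = 0
  mul_inv_mul : ∀ s : S, s * s⁻¹ * s = s
  inv_mul_inv : ∀ s : S, s⁻¹ * s * s⁻¹ = s⁻¹
  idem_comm : ∀ e f : S, e * e = e → f * f = f → e * f = f * e

/-- invariance claim for core representations.  If `e`, `f` are
idempotents with `f ≤ e` and `f` dense in `e`, then `s⁻¹·f·s ≤ s⁻¹·e·s` and `s⁻¹·f·s` is
dense in `s⁻¹·e·s`. -/
theorem statement11 {S : Type*} [InverseSemigroupWithZero S]
    (s e f : S) (he : e * e = e) (hf : f * f = f)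
    (hle : f = f * e)
    (hdense : ∀ d : S, d * d = d → d = d * e → d ≠ 0 → d * f ≠ 0) :
    (s⁻¹ * f * s = (s⁻¹ * f * s) * (s⁻¹ * e * s)) ∧
    ∀ d : S, d * d = d → d = d * (s⁻¹ * e * s) → d ≠ 0 → d * (s⁻¹ * f * s) ≠ 0 := by
  have mim := InverseSemigroupWithZero.mul_inv_mul (S := S)
  have imi := InverseSemigroupWithZero.inv_mul_inv (S := S)
  have comm := InverseSemigroupWithZero.idem_comm (S := S)
  have zmul := InverseSemigroupWithZero.zero_mul (S := S)
  have mulz := InverseSemigroupWithZero.mul_zero (S := S)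
  -- s * s⁻¹ is idempotent
  have hp : (s * s⁻¹) * (s * s⁻¹) = s * s⁻¹ := by rw [← mul_assoc, mim]
  have hq : (s⁻¹ * s) * (s⁻¹ * s) = s⁻¹ * s := by rw [← mul_assoc, imi]
  -- f commutes with s * s⁻¹, e commutes with s * s⁻¹
  have hfp : f * (s * s⁻¹) = (s * s⁻¹) * f := comm f (s * s⁻¹) hf hp
  have hep : e * (s * s⁻¹) = (s * s⁻¹) * e := comm e (s * s⁻¹) he hp
  -- part 1
  have part1 : s⁻¹ * f * s = (s⁻¹ * f * s) * (s⁻¹ * e * s) := by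
    calc s⁻¹ * f * s = s⁻¹ * ((s * s⁻¹) * f) * s := by
          rw [← mul_assoc, ← mul_assoc, imi]
      _ = s⁻¹ * ((s * s⁻¹) * (f * e)) * s := by rw [← hle]
      _ = s⁻¹ * ((f * (s * s⁻¹)) * e) * s := by rw [hfp]; simp only [mul_assoc]
      _ = (s⁻¹ * f * s) * (s⁻¹ * e * s) := by simp only [mul_assoc]
  refine ⟨part1, ?_⟩
  intro d hd hde hd0 hcontra
  -- d * (s⁻¹ * s) = d
  have hds : d * (s⁻¹ * s) = d := by
    calc d * (s⁻¹ * s) = (d * (s⁻¹ * e * s)) * (s⁻¹ * s) := by rw [← hde]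
      _ = d * (s⁻¹ * (e * (s * (s⁻¹ * s)))) := by simp only [mul_assoc]
      _ = d * (s⁻¹ * (e * s)) := by rw [← mul_assoc s, mim]
      _ = d := by rw [← mul_assoc s⁻¹ e s, ← hde]
  have hsd : (s⁻¹ * s) * d = d := by rw [comm (s⁻¹ * s) d hq hd]; exact hds
  set c := s * d * s⁻¹ with hc
  -- c is idempotent
  have hcc : c * c = c := by
    calc c * c = s * (d * ((s⁻¹ * s) * d)) * s⁻¹ := by simp only [hc, mul_assoc]
      _ = s * (d * d) * s⁻¹ := by rw [hsd]
      _ = c := by rw [hd, hc]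
  -- c ≤ e
  have hce : c = c * e := by
    calc c = s * (d * (s⁻¹ * e * s)) * s⁻¹ := by rw [hc, ← hde]
      _ = s * (d * (s⁻¹ * (e * (s * s⁻¹)))) := by simp only [mul_assoc]
      _ = s * (d * (s⁻¹ * ((s * s⁻¹) * e))) := by rw [hep]
      _ = s * (d * (s⁻¹ * (s * s⁻¹))) * e := by simp only [mul_assoc]
      _ = s * (d * s⁻¹) * e := by rw [← mul_assoc s⁻¹, imi]
      _ = c * e := by rw [hc]; simp only [mul_assoc]
  -- c ≠ 0
  have hc0 : c ≠ 0 := by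
    intro h
    apply hd0
    have : s⁻¹ * c * s = d := by
      calc s⁻¹ * c * s = ((s⁻¹ * s) * d) * (s⁻¹ * s) := by simp only [hc, mul_assoc]
        _ = d := by rw [hsd, hds]
    rw [h, mulz, zmul] at this
    exact this.symm
  -- density applied to c
  have hcf : c * f ≠ 0 := hdense c hcc hce hc0
  apply hcf
  -- from d * (s⁻¹ * f * s) = 0 derive c * f = 0
  have key : s * (d * (s⁻¹ * f * s)) * s⁻¹ = c * f := by
    calc s * (d * (s⁻¹ * f * s)) * s⁻¹
        = s * (d * (s⁻¹ * (f * (s * s⁻¹)))) := by simp only [mul_assoc]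
      _ = s * (d * (s⁻¹ * ((s * s⁻¹) * f))) := by rw [hfp]
      _ = s * ((d * (s⁻¹ * s)) * (s⁻¹ * f)) := by simp only [mul_assoc]
      _ = s * (d * (s⁻¹ * f)) := by rw [hds]
      _ = c * f := by simp only [hc, mul_assoc]
  rw [← key, hcontra, mulz, zmul]
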